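/- Let a = (a_1 ≥ a_2 ≥ ⋯ ≥ a_p ≥ 0) be a finite non-increasing list of non-negative integers and define r_i = #{j : a_j ≥ i} for i ≥ 0 (so r_0 = p). Then ∑_{(j,k) : a_j > a_k} (a_j − a_k − 1) = ∑_{i ≥ 1} (r_0 − r_i)·r_{i+1}, where the left sum runs over all ordered pairs (j,k) with a_j > a_k. -/

import Mathlib

open Finset

/-- Codimension of singular blocks in terms of the Weyr characteristic:
`∑_{(j,k): a_j > a_k} (a_j - a_k - 1) = ∑_{i ≥ 1} (r₀ - rᵢ) r_{i+1}`. -/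
theorem stmt_1 (p N : ℕ) (a : Fin p → ℕ)
    (hmono : ∀ j k : Fin p, j ≤ k → a k ≤ a j) (hbound : ∀ j, a j ≤ N) :
    let r : ℕ → ℕ := fun i => (Finset.univ.filter (fun j : Fin p => i ≤ a j)).card
    (∑ j : Fin p, ∑ k : Fin p, if a k < a j then a j - a k - 1 else 0)
      = ∑ i ∈ Finset.Icc 1 N, (r 0 - r i) * r (i + 1) := by
  intro r
  have key : ∀ j k : Fin p, (if a k < a j then a j - a k - 1 else 0)
      = ∑ i ∈ Finset.Icc 1 N, (if a k < i then 1 else 0) * (if i < a j then 1 else 0) := by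
    intro j k
    have h1 : ∀ i, (if a k < i then 1 else 0) * (if i < a j then 1 else 0)
        = if a k < i ∧ i < a j then 1 else 0 := by
      intro i; by_cases h1 : a k < i <;> by_cases h2 : i < a j <;> simp [h1, h2]
    simp_rw [h1]
    rw [← Finset.card_filter]
    have h2 : (Finset.Icc 1 N).filter (fun i => a k < i ∧ i < a j)
        = Finset.Ioo (a k) (a j) := by
      ext i
      have := hbound j
      simp only [Finset.mem_filter, Finset.mem_Icc, Finset.mem_Ioo]
      omega
    rw [h2, Nat.card_Ioo]
    split <;> omega
  simp_rw [key]
  conv_lhs => enter [2, j]; rw [Finset.sum_comm]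
  rw [Finset.sum_comm]
  refine Finset.sum_congr rfl fun i _ => ?_
  have hprod : (∑ x : Fin p, ∑ y : Fin p, (if a y < i then 1 else 0) * (if i < a x then 1 else 0))
      = (∑ y : Fin p, if a y < i then 1 else 0) * (∑ x : Fin p, if i < a x then 1 else 0) := by
    rw [Finset.sum_mul_sum, Finset.sum_comm]
  rw [hprod]
  congr 1
  · -- ∑ k, if a k < i then 1 else 0 = r 0 - r i
    rw [← Finset.card_filter]
    have h0 : (Finset.univ.filter (fun j : Fin p => 0 ≤ a j)).card = p := by
      simp
    have htot := Finset.card_filter_add_card_filter_not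
      (s := (Finset.univ : Finset (Fin p))) (p := fun j => i ≤ a j)
    have hc : (Finset.univ.filter (fun j : Fin p => ¬ i ≤ a j)).card
        = (Finset.univ.filter (fun j : Fin p => a j < i)).card := by
      congr 1
      apply Finset.filter_congr
      intro j _
      simp
    simp only [Finset.card_univ, Fintype.card_fin] at htot
    simp only [r]
    omega
  · -- ∑ j, if i < a j then 1 else 0 = r (i+1)
    rw [← Finset.card_filter]
    rfl
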